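/- arXiv:2505.24657 — 2 statements merged into one kernel-verified Lean document; each statement's English description precedes it below -/
import Mathlib

section
/- Let (X,d_X) and (Y,d_Y) be compact metric spaces, and let (X, f_{1,∞}) and (Y, g_{1,∞}) be non-autonomous discrete systems such that f_{1,∞} and g_{1,∞} are feeble open, every f_n and every g_n is surjective, (f_n) converges uniformly to a continuous map f : X → X with the compositions (f_r^k) converging collectively to (f^k), and (g_n) converges uniformly to a continuous map g : Y → Y with the compositions (g_r^k) converging collectively to (g^k). If f_{1,∞} and g_{1,∞} are both syndetically transitive and weakly mixing, then the product NDS (X × Y, (f_n × g_n)_{n≥1}) is syndetically transitive and weakly mixing. -/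
open Set Filter

/-- `nds f i n` is the `n`-step composition `f_i^n = f (i+n-1) ∘ ⋯ ∘ f i`, with `nds f i 0 = id`. -/
def nds {X : Type*} (f : ℕ → X → X) (i : ℕ) : ℕ → X → X
  | 0 => id
  | n + 1 => f (i + n) ∘ nds f i n

section TopDefs

variable {X : Type*} [TopologicalSpace X]

/-- The NDS `f_{1,∞}` is (topologically) transitive. -/
def NDSTransitive (f : ℕ → X → X) : Prop :=
  ∀ U V : Set X, IsOpen U → U.Nonempty → IsOpen V → V.Nonempty →
    ∃ n : ℕ, 0 < n ∧ (nds f 1 n '' U ∩ V).Nonempty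

/-- The NDS `f_{1,∞}` is mixing. -/
def NDSMixing (f : ℕ → X → X) : Prop :=
  ∀ U V : Set X, IsOpen U → U.Nonempty → IsOpen V → V.Nonempty →
    ∃ N : ℕ, ∀ n : ℕ, N ≤ n → (nds f 1 n '' U ∩ V).Nonempty

/-- The NDS `f_{1,∞}` is weakly mixing. -/
def NDSWeaklyMixing (f : ℕ → X → X) : Prop :=
  ∀ U₁ U₂ V₁ V₂ : Set X, IsOpen U₁ → U₁.Nonempty → IsOpen U₂ → U₂.Nonempty →
    IsOpen V₁ → V₁.Nonempty → IsOpen V₂ → V₂.Nonempty →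
    ∃ n : ℕ, 0 < n ∧ (nds f 1 n '' U₁ ∩ V₁).Nonempty ∧ (nds f 1 n '' U₂ ∩ V₂).Nonempty

/-- The NDS `f_{1,∞}` is multi-transitive. -/
def NDSMultiTransitive (f : ℕ → X → X) : Prop :=
  ∀ m : ℕ, 0 < m → ∀ U V : Fin m → Set X,
    (∀ j, IsOpen (U j)) → (∀ j, (U j).Nonempty) →
    (∀ j, IsOpen (V j)) → (∀ j, (V j).Nonempty) →
    ∃ l : ℕ, 0 < l ∧ ∀ j : Fin m, (nds f 1 (l * (j.1 + 1)) '' U j ∩ V j).Nonempty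

/-- The NDS `f_{1,∞}` is totally transitive. -/
def NDSTotallyTransitive (f : ℕ → X → X) : Prop :=
  ∀ k : ℕ, 0 < k → ∀ U V : Set X, IsOpen U → U.Nonempty → IsOpen V → V.Nonempty →
    ∃ n : ℕ, 0 < n ∧ (nds f 1 (n * k) '' U ∩ V).Nonempty

/-- The NDS `f_{1,∞}` is minimal: every orbit is dense. -/
def NDSMinimal (f : ℕ → X → X) : Prop :=
  ∀ x : X, Dense (Set.range fun n : ℕ => nds f 1 n x)

/-- The NDS `f_{1,∞}` is feeble open. -/
def FeebleOpen (f : ℕ → X → X) : Prop :=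
  ∀ i : ℕ, 1 ≤ i → ∀ U : Set X, IsOpen U → U.Nonempty → (interior (f i '' U)).Nonempty

/-- A set of positive integers is syndetic (has bounded gaps). -/
def SyndeticSet (A : Set ℕ) : Prop :=
  ∃ M : ℕ, ∀ i : ℕ, 1 ≤ i → ∃ j ∈ A, i ≤ j ∧ j ≤ i + M

/-- A set of positive integers is thick (contains arbitrarily long runs). -/
def ThickSet (A : Set ℕ) : Prop :=
  ∀ p : ℕ, ∃ n : ℕ, ∀ j : ℕ, n ≤ j → j ≤ n + p → j ∈ A

/-- The NDS `f_{1,∞}` is syndetically transitive. -/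
def NDSSyndeticallyTransitive (f : ℕ → X → X) : Prop :=
  ∀ U V : Set X, IsOpen U → U.Nonempty → IsOpen V → V.Nonempty →
    SyndeticSet {n : ℕ | 0 < n ∧ (nds f 1 n '' U ∩ V).Nonempty}

/-- The NDS `f_{1,∞}` has dense periodic points. -/
def NDSDensePeriodicPoints (f : ℕ → X → X) : Prop :=
  Dense {x : X | ∃ k : ℕ, 0 < k ∧ ∀ n : ℕ, 0 < n → nds f 1 (k * n) x = x}

/-- The NDS `f_{k,∞}` is strongly transitive. -/
def NDSStronglyTransitiveFrom (f : ℕ → X → X) (k : ℕ) : Prop :=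
  ∀ U : Set X, IsOpen U → U.Nonempty →
    ∃ M : ℕ, 0 < M ∧ (⋃ i ∈ Set.Icc 1 M, nds f k i '' U) = Set.univ

/-- An autonomous map is transitive. -/
def MapTransitive {Y : Type*} [TopologicalSpace Y] (g : Y → Y) : Prop :=
  ∀ U V : Set Y, IsOpen U → U.Nonempty → IsOpen V → V.Nonempty →
    ∃ n : ℕ, 0 < n ∧ (g^[n] '' U ∩ V).Nonempty

/-- An autonomous map is weakly mixing. -/
def MapWeaklyMixing {Y : Type*} [TopologicalSpace Y] (g : Y → Y) : Prop :=
  ∀ U₁ U₂ V₁ V₂ : Set Y, IsOpen U₁ → U₁.Nonempty → IsOpen U₂ → U₂.Nonempty →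
    IsOpen V₁ → V₁.Nonempty → IsOpen V₂ → V₂.Nonempty →
    ∃ n : ℕ, 0 < n ∧ (g^[n] '' U₁ ∩ V₁).Nonempty ∧ (g^[n] '' U₂ ∩ V₂).Nonempty

/-- An autonomous map is totally transitive. -/
def MapTotallyTransitive {Y : Type*} [TopologicalSpace Y] (g : Y → Y) : Prop :=
  ∀ k : ℕ, 0 < k → ∀ U V : Set Y, IsOpen U → U.Nonempty → IsOpen V → V.Nonempty →
    ∃ n : ℕ, 0 < n ∧ (g^[n * k] '' U ∩ V).Nonempty

/-- An autonomous map is syndetically transitive. -/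
def MapSyndeticallyTransitive {Y : Type*} [TopologicalSpace Y] (g : Y → Y) : Prop :=
  ∀ U V : Set Y, IsOpen U → U.Nonempty → IsOpen V → V.Nonempty →
    SyndeticSet {n : ℕ | 0 < n ∧ (g^[n] '' U ∩ V).Nonempty}

/-- An autonomous map is minimal. -/
def MapMinimal {Y : Type*} [TopologicalSpace Y] (g : Y → Y) : Prop :=
  ∀ x : Y, Dense (Set.range fun n : ℕ => g^[n] x)

end TopDefs

section MetricDefs

variable {X : Type*} [MetricSpace X]

/-- The compositions `(f_r^k)` converge collectively to `(f^k)` (w.r.t. the supremum metric). -/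
def CollectivelyConverges (f : ℕ → X → X) (g : X → X) : Prop :=
  ∀ ε : ℝ, 0 < ε → ∃ r₀ : ℕ, ∀ r : ℕ, r₀ ≤ r → ∀ k : ℕ, 1 ≤ k → ∀ x : X,
    dist (nds f r k x) (g^[k] x) < ε

/-- `N(U, δ)`: the times at which the NDS is `δ`-sensitive on `U`. -/
def SensSet (f : ℕ → X → X) (U : Set X) (δ : ℝ) : Set ℕ :=
  {n : ℕ | 0 < n ∧ ∃ x ∈ U, ∃ y ∈ U, δ < dist (nds f 1 n x) (nds f 1 n y)}

/-- The NDS `f_{1,∞}` is multi-sensitive. -/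
def NDSMultiSensitive (f : ℕ → X → X) : Prop :=
  ∃ δ : ℝ, 0 < δ ∧ ∀ m : ℕ, 0 < m → ∀ U : Fin m → Set X,
    (∀ i, IsOpen (U i)) → (∀ i, (U i).Nonempty) → (⋂ i, SensSet f (U i) δ).Nonempty

/-- The NDS `f_{1,∞}` is thickly sensitive. -/
def NDSThicklySensitive (f : ℕ → X → X) : Prop :=
  ∃ δ : ℝ, 0 < δ ∧ ∀ U : Set X, IsOpen U → U.Nonempty → ThickSet (SensSet f U δ)

/-- The NDS `f_{1,∞}` is syndetically sensitive. -/
def NDSSyndeticallySensitive (f : ℕ → X → X) : Prop :=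
  ∃ δ : ℝ, 0 < δ ∧ ∀ U : Set X, IsOpen U → U.Nonempty → SyndeticSet (SensSet f U δ)

/-- The NDS `f_{1,∞}` is mildly mixing: its product with every transitive NDS on a compact
metric space is transitive. -/
def NDSMildlyMixing (f : ℕ → X → X) : Prop :=
  ∀ (Y : Type*) [MetricSpace Y] [CompactSpace Y] (g : ℕ → Y → Y),
    (∀ n : ℕ, 1 ≤ n → Continuous (g n)) → NDSTransitive g →
    NDSTransitive (fun n (p : X × Y) => (f n p.1, g n p.2))

/-- The NDS `f_{1,∞}` is Li–Yorke chaotic. -/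
def LiYorkeChaotic (f : ℕ → X → X) : Prop :=
  ∃ S : Set X, ¬S.Countable ∧ ∀ x ∈ S, ∀ y ∈ S, x ≠ y →
    Filter.liminf (fun n : ℕ => dist (nds f 1 n x) (nds f 1 n y)) Filter.atTop = 0 ∧
    0 < Filter.limsup (fun n : ℕ => dist (nds f 1 n x) (nds f 1 n y)) Filter.atTop

end MetricDefs

section AuxProof

def TSynd (A : Set ℕ) : Prop :=
  ∀ p : ℕ, ∃ M : ℕ, ∀ i : ℕ, 1 ≤ i →
    ∃ n : ℕ, i ≤ n ∧ n ≤ i + M ∧ ∀ j : ℕ, n ≤ j → j ≤ n + p → j ∈ A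

lemma nds_add {X : Type*} (f : ℕ → X → X) (i m k : ℕ) :
    nds f i (m + k) = nds f (i + m) k ∘ nds f i m := by
  induction k with
  | zero => rfl
  | succ k ih =>
    show nds f i ((m + k) + 1) = _
    show f (i + (m + k)) ∘ nds f i (m + k) = (f (i + m + k) ∘ nds f (i + m) k) ∘ nds f i m
    rw [ih, show i + (m + k) = i + m + k by omega]
    rfl

lemma nds_cont {X : Type*} [TopologicalSpace X] {f : ℕ → X → X}
    (hc : ∀ n : ℕ, 1 ≤ n → Continuous (f n)) {i : ℕ} (hi : 1 ≤ i) (k : ℕ) :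
    Continuous (nds f i k) := by
  induction k with
  | zero => exact continuous_id
  | succ k ih => exact (hc (i + k) (by omega)).comp ih

lemma nds_surj {X : Type*} {f : ℕ → X → X}
    (hs : ∀ n : ℕ, 1 ≤ n → Function.Surjective (f n)) {i : ℕ} (hi : 1 ≤ i) (k : ℕ) :
    Function.Surjective (nds f i k) := by
  induction k with
  | zero => exact Function.surjective_id
  | succ k ih => exact (hs (i + k) (by omega)).comp ih

lemma nds_feeble {X : Type*} [TopologicalSpace X] {f : ℕ → X → X}
    (hf : FeebleOpen f) {i : ℕ} (hi : 1 ≤ i) (k : ℕ) {U : Set X}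
    (hU : IsOpen U) (hUne : U.Nonempty) : (interior (nds f i k '' U)).Nonempty := by
  induction k with
  | zero => simpa [nds, interior_eq_iff_isOpen.mpr hU] using hUne
  | succ k ih =>
    have h1 : (interior (f (i + k) '' interior (nds f i k '' U))).Nonempty :=
      hf (i + k) (by omega) _ isOpen_interior ih
    refine h1.mono (interior_mono ?_)
    refine image_mono interior_subset |>.trans ?_
    rw [show nds f i (k + 1) = f (i + k) ∘ nds f i k from rfl, image_comp]

lemma nds_prod {X Y : Type*} (f : ℕ → X → X) (g : ℕ → Y → Y) (i k : ℕ) (p : X × Y) :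
    nds (fun n (q : X × Y) => (f n q.1, g n q.2)) i k p = (nds f i k p.1, nds g i k p.2) := by
  induction k with
  | zero => rfl
  | succ k ih =>
    show (fun q : X × Y => (f (i+k) q.1, g (i+k) q.2)) (nds _ i k p) = _
    rw [ih]
    rfl

lemma TSynd.syndetic {A : Set ℕ} (h : TSynd A) : SyndeticSet A := by
  obtain ⟨M, hM⟩ := h 0
  refine ⟨M, fun i hi => ?_⟩
  obtain ⟨n, h1, h2, h3⟩ := hM i hi
  exact ⟨n, h3 n le_rfl (by omega), h1, h2⟩

lemma TSynd.inter {A B : Set ℕ} (hA : TSynd A) (hB : TSynd B) : TSynd (A ∩ B) := by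
  intro p
  obtain ⟨MA, hMA⟩ := hA p
  obtain ⟨MB, hMB⟩ := hB (p + MA)
  refine ⟨MB + MA, fun i hi => ?_⟩
  obtain ⟨nB, hB1, hB2, hB3⟩ := hMB i hi
  obtain ⟨nA, hA1, hA2, hA3⟩ := hMA nB (by omega)
  refine ⟨nA, by omega, by omega, fun j hj1 hj2 => ?_⟩
  exact ⟨hA3 j hj1 hj2, hB3 j (by omega) (by omega)⟩

lemma TSynd.mono {A B : Set ℕ} (hAB : A ⊆ B) (h : TSynd A) : TSynd B := by
  intro p
  obtain ⟨M, hM⟩ := h p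
  exact ⟨M, fun i hi => by
    obtain ⟨n, h1, h2, h3⟩ := hM i hi
    exact ⟨n, h1, h2, fun j hj1 hj2 => hAB (h3 j hj1 hj2)⟩⟩

lemma limit_surj {X : Type*} [MetricSpace X] [CompactSpace X] {f : ℕ → X → X} {F : X → X}
    (hF : Continuous F) (hsurj : ∀ n : ℕ, 1 ≤ n → Function.Surjective (f n))
    (hunif : TendstoUniformly (fun n x => f n x) F Filter.atTop) :
    Function.Surjective F := by
  intro y
  have hcl : IsClosed (Set.range F) := (isCompact_range hF).isClosed
  have : y ∈ closure (Set.range F) := by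
    rw [Metric.mem_closure_iff]
    intro ε hε
    obtain ⟨N, hN⟩ := Filter.eventually_atTop.mp (Metric.tendstoUniformly_iff.mp hunif ε hε)
    obtain ⟨x, hx⟩ := hsurj (max N 1) (le_max_right _ _) y
    refine ⟨F x, Set.mem_range_self x, ?_⟩
    have := hN (max N 1) (le_max_left _ _) x
    rw [hx] at this
    rwa [dist_comm]
  rwa [hcl.closure_eq] at this

lemma open_diff_finite_nonempty {X : Type*} [MetricSpace X] {f : ℕ → X → X}
    (hwm : NDSWeaklyMixing f) (hxy : ∃ x y : X, x ≠ y)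
    {W : Set X} (hW : IsOpen W) (hWne : W.Nonempty) {P : Set X} (hP : P.Finite) :
    (W \ P).Nonempty := by
  by_contra hc
  rw [Set.not_nonempty_iff_eq_empty, Set.diff_eq_empty] at hc
  have hWfin : W.Finite := hP.subset hc
  obtain ⟨z, hz⟩ := hWne
  have hzopen : IsOpen ({z} : Set X) := by
    have : ({z} : Set X) = W \ (W \ {z}) := by
      ext a
      constructor
      · rintro rfl; exact ⟨hz, fun h => h.2 rfl⟩
      · rintro ⟨haW, ha⟩
        by_contra hne
        exact ha ⟨haW, fun h => hne h⟩
    rw [this]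
    exact hW.sdiff ((Set.Finite.diff hWfin : (W \ {z}).Finite).isClosed)
  obtain ⟨x, y, hne⟩ := hxy
  have hd : (0:ℝ) < dist x y := dist_pos.mpr hne
  obtain ⟨n, -, ⟨q1, hq1, hq1'⟩, ⟨q2, hq2, hq2'⟩⟩ :=
    hwm {z} {z} (Metric.ball x (dist x y / 2)) (Metric.ball y (dist x y / 2))
      hzopen ⟨z, rfl⟩ hzopen ⟨z, rfl⟩ Metric.isOpen_ball ⟨x, by simpa using hd⟩
      Metric.isOpen_ball ⟨y, by simpa using hd⟩
  obtain ⟨a, ha, rfl⟩ := hq1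
  obtain ⟨b, hb, rfl⟩ := hq2
  rw [Set.mem_singleton_iff] at ha hb
  rw [ha] at hq1'; rw [hb] at hq2'
  rw [Metric.mem_ball] at hq1' hq2'
  have := dist_triangle x (nds f 1 n z) y
  rw [dist_comm x (nds f 1 n z)] at this
  linarith

lemma finInter {X : Type*} [TopologicalSpace X] {F : X → X} (hF : Continuous F)
    (hwm : MapWeaklyMixing F) (x₀ : X) :
    ∀ (m : ℕ) (A B : Fin m → Set X), (∀ j, IsOpen (A j)) → (∀ j, (A j).Nonempty) →
      (∀ j, IsOpen (B j)) → (∀ j, (B j).Nonempty) →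
      ∃ A' B' : Set X, IsOpen A' ∧ A'.Nonempty ∧ IsOpen B' ∧ B'.Nonempty ∧
        ∀ n : ℕ, (F^[n] '' A' ∩ B').Nonempty → ∀ j, (F^[n] '' A j ∩ B j).Nonempty := by
  intro m
  induction m with
  | zero =>
    intro A B _ _ _ _
    exact ⟨Set.univ, Set.univ, isOpen_univ, ⟨x₀, trivial⟩, isOpen_univ, ⟨x₀, trivial⟩,
      fun n _ j => j.elim0⟩
  | succ m ih =>
    intro A B hAo hAne hBo hBne
    obtain ⟨A₁, B₁, hA₁o, hA₁ne, hB₁o, hB₁ne, hprop⟩ :=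
      ih (A ∘ Fin.succ) (B ∘ Fin.succ) (fun j => hAo _) (fun j => hAne _)
        (fun j => hBo _) (fun j => hBne _)
    obtain ⟨n₀, -, ⟨za, ⟨a, haA0, rfl⟩, haA₁⟩, ⟨zb, ⟨b, hbB0, rfl⟩, hbB₁⟩⟩ :=
      hwm (A 0) (B 0) A₁ B₁ (hAo 0) (hAne 0) (hBo 0) (hBne 0) hA₁o hA₁ne hB₁o hB₁ne
    refine ⟨A 0 ∩ (F^[n₀]) ⁻¹' A₁, B 0 ∩ (F^[n₀]) ⁻¹' B₁,
      (hAo 0).inter ((hF.iterate n₀).isOpen_preimage _ hA₁o), ⟨a, haA0, haA₁⟩,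
      (hBo 0).inter ((hF.iterate n₀).isOpen_preimage _ hB₁o), ⟨b, hbB0, hbB₁⟩, ?_⟩
    rintro n ⟨y, ⟨x, hxA', rfl⟩, hyB'⟩
    intro j
    refine Fin.cases ?_ ?_ j
    · exact ⟨F^[n] x, ⟨x, hxA'.1, rfl⟩, hyB'.1⟩
    · intro j'
      have key : (F^[n] '' A₁ ∩ B₁).Nonempty := by
        refine ⟨F^[n] (F^[n₀] x), ⟨F^[n₀] x, hxA'.2, rfl⟩, ?_⟩
        have : F^[n] (F^[n₀] x) = F^[n₀] (F^[n] x) := by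
          rw [← Function.iterate_add_apply, ← Function.iterate_add_apply, Nat.add_comm]
        rw [this]
        exact hyB'.2
      exact hprop n key j'

lemma limit_syndTrans {X : Type*} [MetricSpace X] {f : ℕ → X → X} {F : X → X}
    (hcont : ∀ n : ℕ, 1 ≤ n → Continuous (f n))
    (hsurj : ∀ n : ℕ, 1 ≤ n → Function.Surjective (f n))
    (hcoll : CollectivelyConverges f F)
    (hsynd : NDSSyndeticallyTransitive f) :
    MapSyndeticallyTransitive F := by
  intro U V hU hUne hV hVne
  obtain ⟨v, hv⟩ := hVne
  obtain ⟨δ, hδ, hball⟩ := Metric.isOpen_iff.mp hV v hv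
  set ε := δ / 2 with hε
  have hεpos : 0 < ε := by positivity
  obtain ⟨r₀, hr₀⟩ := hcoll ε hεpos
  set m := r₀ + 1 with hm
  have hA₀o : IsOpen ((nds f 1 m) ⁻¹' U) := (nds_cont hcont le_rfl m).isOpen_preimage _ hU
  have hA₀ne : ((nds f 1 m) ⁻¹' U).Nonempty := by
    obtain ⟨u, hu⟩ := hUne
    obtain ⟨x, hx⟩ := nds_surj hsurj le_rfl m u
    exact ⟨x, by rw [Set.mem_preimage, hx]; exact hu⟩
  obtain ⟨M, hM⟩ := hsynd ((nds f 1 m) ⁻¹' U) (Metric.ball v ε) hA₀o hA₀ne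
    Metric.isOpen_ball ⟨v, Metric.mem_ball_self hεpos⟩
  refine ⟨M, fun i hi => ?_⟩
  obtain ⟨j, ⟨hj0, ⟨q, ⟨x, hxA, rfl⟩, hqball⟩⟩, hj1, hj2⟩ := hM (i + m) (by omega)
  set k := j - m with hk
  have hjmk : j = m + k := by omega
  have hk1 : 1 ≤ k := by omega
  refine ⟨k, ⟨by omega, ?_⟩, by omega, by omega⟩
  set u' := nds f 1 m x with hu'
  have heq : nds f 1 j x = nds f (1 + m) k u' := by
    rw [hjmk, nds_add]; rfl
  have hdist : dist (nds f (1 + m) k u') (F^[k] u') < ε := hr₀ (1 + m) (by omega) k hk1 u'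
  refine ⟨F^[k] u', ⟨u', hxA, rfl⟩, hball ?_⟩
  rw [Metric.mem_ball] at hqball ⊢
  rw [heq] at hqball
  have := dist_triangle (F^[k] u') (nds f (1 + m) k u') v
  rw [dist_comm (F^[k] u') (nds f (1 + m) k u')] at this
  rw [hε] at *
  linarith

lemma limit_wm {X : Type*} [MetricSpace X] {f : ℕ → X → X} {F : X → X}
    (hcont : ∀ n : ℕ, 1 ≤ n → Continuous (f n))
    (hsurj : ∀ n : ℕ, 1 ≤ n → Function.Surjective (f n))
    (hcoll : CollectivelyConverges f F)
    (hwm : NDSWeaklyMixing f) :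
    MapWeaklyMixing F := by
  intro U₁ U₂ V₁ V₂ hU₁ hU₁n hU₂ hU₂n hV₁ hV₁n hV₂ hV₂n
  by_cases htriv : ∀ x y : X, x = y
  · obtain ⟨u₁, hu₁⟩ := hU₁n
    obtain ⟨u₂, hu₂⟩ := hU₂n
    obtain ⟨v₁, hv₁⟩ := hV₁n
    obtain ⟨v₂, hv₂⟩ := hV₂n
    refine ⟨1, one_pos, ⟨F^[1] u₁, ⟨u₁, hu₁, rfl⟩, ?_⟩, ⟨F^[1] u₂, ⟨u₂, hu₂, rfl⟩, ?_⟩⟩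
    · rw [htriv (F^[1] u₁) v₁]; exact hv₁
    · rw [htriv (F^[1] u₂) v₂]; exact hv₂
  push_neg at htriv
  -- choose targets and approximation scale
  obtain ⟨v₁, hv₁⟩ := hV₁n
  obtain ⟨v₂, hv₂⟩ := hV₂n
  obtain ⟨δ₁, hδ₁, hball₁⟩ := Metric.isOpen_iff.mp hV₁ v₁ hv₁
  obtain ⟨δ₂, hδ₂, hball₂⟩ := Metric.isOpen_iff.mp hV₂ v₂ hv₂
  set ε := min δ₁ δ₂ / 2 with hεdef
  have hεpos : 0 < ε := by positivity
  have hball₁' : Metric.ball v₁ (2 * ε) ⊆ V₁ := by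
    refine subset_trans (Metric.ball_subset_ball ?_) hball₁
    rw [hεdef]; have := min_le_left δ₁ δ₂; linarith
  have hball₂' : Metric.ball v₂ (2 * ε) ⊆ V₂ := by
    refine subset_trans (Metric.ball_subset_ball ?_) hball₂
    rw [hεdef]; have := min_le_right δ₁ δ₂; linarith
  obtain ⟨r₀, hr₀⟩ := hcoll ε hεpos
  set m := r₀ + 1 with hm
  have hm1 : 1 ≤ m := by omega
  -- sources: preimages at time m
  have hA : ∀ (U : Set X), IsOpen U → U.Nonempty →
      IsOpen ((nds f 1 m) ⁻¹' U) ∧ ((nds f 1 m) ⁻¹' U).Nonempty := by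
    intro U hU hUne
    refine ⟨(nds_cont hcont le_rfl m).isOpen_preimage _ hU, ?_⟩
    obtain ⟨u, hu⟩ := hUne
    obtain ⟨x, hx⟩ := nds_surj hsurj le_rfl m u
    exact ⟨x, by rw [Set.mem_preimage, hx]; exact hu⟩
  obtain ⟨hA₁o, hA₁ne⟩ := hA U₁ hU₁ hU₁n
  obtain ⟨hA₂o, hA₂ne⟩ := hA U₂ hU₂ hU₂n
  obtain ⟨a₁, ha₁⟩ := hA₁ne
  obtain ⟨a₂, ha₂⟩ := hA₂ne
  -- the finite set of small-time images
  set P : Set X := ((fun n => nds f 1 n a₁) '' (Set.Icc 1 m)) ∪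
    ((fun n => nds f 1 n a₂) '' (Set.Icc 1 m)) with hPdef
  have hPfin : P.Finite :=
    ((Set.finite_Icc 1 m).image _).union ((Set.finite_Icc 1 m).image _)
  -- points in the target balls avoiding P
  obtain ⟨w₁, hw₁ball, hw₁P⟩ := open_diff_finite_nonempty hwm htriv Metric.isOpen_ball
    ⟨v₁, Metric.mem_ball_self hεpos⟩ hPfin (W := Metric.ball v₁ ε)
  obtain ⟨w₂, hw₂ball, hw₂P⟩ := open_diff_finite_nonempty hwm htriv Metric.isOpen_ball
    ⟨v₂, Metric.mem_ball_self hεpos⟩ hPfin (W := Metric.ball v₂ ε)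
  -- safety radii
  obtain ⟨γ₁, hγ₁, hγ₁P⟩ := Metric.isOpen_iff.mp hPfin.isClosed.isOpen_compl w₁ hw₁P
  obtain ⟨γ₂, hγ₂, hγ₂P⟩ := Metric.isOpen_iff.mp hPfin.isClosed.isOpen_compl w₂ hw₂P
  -- refined sources
  set A₁' : Set X := ((nds f 1 m) ⁻¹' U₁) ∩
    ⋂ t : Fin m, (nds f 1 (t.1 + 1)) ⁻¹' (Metric.ball (nds f 1 (t.1 + 1) a₁) (γ₁ / 2)) with hA₁'def
  set A₂' : Set X := ((nds f 1 m) ⁻¹' U₂) ∩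
    ⋂ t : Fin m, (nds f 1 (t.1 + 1)) ⁻¹' (Metric.ball (nds f 1 (t.1 + 1) a₂) (γ₂ / 2)) with hA₂'def
  have hA₁'o : IsOpen A₁' := hA₁o.inter (isOpen_iInter_of_finite fun t =>
    (nds_cont hcont le_rfl _).isOpen_preimage _ Metric.isOpen_ball)
  have hA₂'o : IsOpen A₂' := hA₂o.inter (isOpen_iInter_of_finite fun t =>
    (nds_cont hcont le_rfl _).isOpen_preimage _ Metric.isOpen_ball)
  have hA₁'ne : A₁'.Nonempty := ⟨a₁, ha₁, Set.mem_iInter.mpr fun t =>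
    Metric.mem_ball_self (by positivity : (0:ℝ) < γ₁/2)⟩
  have hA₂'ne : A₂'.Nonempty := ⟨a₂, ha₂, Set.mem_iInter.mpr fun t =>
    Metric.mem_ball_self (by positivity : (0:ℝ) < γ₂/2)⟩
  -- refined targets
  set B₁ : Set X := Metric.ball w₁ (γ₁ / 2) ∩ Metric.ball v₁ ε with hB₁def
  set B₂ : Set X := Metric.ball w₂ (γ₂ / 2) ∩ Metric.ball v₂ ε with hB₂def
  have hB₁o : IsOpen B₁ := Metric.isOpen_ball.inter Metric.isOpen_ball
  have hB₂o : IsOpen B₂ := Metric.isOpen_ball.inter Metric.isOpen_ball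
  have hB₁ne : B₁.Nonempty := ⟨w₁, Metric.mem_ball_self (by positivity), hw₁ball⟩
  have hB₂ne : B₂.Nonempty := ⟨w₂, Metric.mem_ball_self (by positivity), hw₂ball⟩
  -- apply NDS weak mixing
  obtain ⟨n, hn0, ⟨q₁, ⟨x₁, hx₁, rfl⟩, hq₁⟩, ⟨q₂, ⟨x₂, hx₂, rfl⟩, hq₂⟩⟩ :=
    hwm A₁' A₂' B₁ B₂ hA₁'o hA₁'ne hA₂'o hA₂'ne hB₁o hB₁ne hB₂o hB₂ne
  -- rule out small times
  have hnm : m < n := by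
    by_contra hle
    push_neg at hle
    have ht : n - 1 < m := by omega
    have hmem := hx₁.2
    rw [Set.mem_iInter] at hmem
    have h1 := hmem ⟨n - 1, ht⟩
    rw [Set.mem_preimage, Metric.mem_ball] at h1
    have hn1 : n - 1 + 1 = n := by omega
    rw [hn1] at h1
    -- nds f 1 n a₁ ∈ P but within γ₁ of w₁ : contradiction
    have hPmem : nds f 1 n a₁ ∈ P := Or.inl ⟨n, ⟨by omega, by omega⟩, rfl⟩
    have hq₁' : dist (nds f 1 n x₁) w₁ < γ₁ / 2 := by
      have := hq₁.1; rwa [Metric.mem_ball] at this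
    have : dist (nds f 1 n a₁) w₁ < γ₁ := by
      have htri := dist_triangle (nds f 1 n a₁) (nds f 1 n x₁) w₁
      rw [dist_comm (nds f 1 n a₁) (nds f 1 n x₁)] at htri
      linarith
    have : nds f 1 n a₁ ∈ Pᶜ := hγ₁P (by rwa [Metric.mem_ball])
    exact this hPmem
  -- large time: transfer to F
  set k := n - m with hkdef
  have hk1 : 1 ≤ k := by omega
  have hnmk : n = m + k := by omega
  refine ⟨k, by omega, ?_, ?_⟩
  · set u := nds f 1 m x₁ with hudef
    have heq : nds f 1 n x₁ = nds f (1 + m) k u := by rw [hnmk, nds_add]; rfl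
    have hdist : dist (nds f (1 + m) k u) (F^[k] u) < ε := hr₀ (1 + m) (by omega) k hk1 u
    refine ⟨F^[k] u, ⟨u, hx₁.1, rfl⟩, hball₁' ?_⟩
    have hq : dist (nds f 1 n x₁) v₁ < ε := by have := hq₁.2; rwa [Metric.mem_ball] at this
    rw [heq] at hq
    rw [Metric.mem_ball]
    have := dist_triangle (F^[k] u) (nds f (1 + m) k u) v₁
    rw [dist_comm (F^[k] u) (nds f (1 + m) k u)] at this
    linarith
  · set u := nds f 1 m x₂ with hudef
    have heq : nds f 1 n x₂ = nds f (1 + m) k u := by rw [hnmk, nds_add]; rfl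
    have hdist : dist (nds f (1 + m) k u) (F^[k] u) < ε := hr₀ (1 + m) (by omega) k hk1 u
    refine ⟨F^[k] u, ⟨u, hx₂.1, rfl⟩, hball₂' ?_⟩
    have hq : dist (nds f 1 n x₂) v₂ < ε := by have := hq₂.2; rwa [Metric.mem_ball] at this
    rw [heq] at hq
    rw [Metric.mem_ball]
    have := dist_triangle (F^[k] u) (nds f (1 + m) k u) v₂
    rw [dist_comm (F^[k] u) (nds f (1 + m) k u)] at this
    linarith

lemma master {X : Type*} [MetricSpace X] [CompactSpace X] {f : ℕ → X → X} {F : X → X}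
    (hcont : ∀ n : ℕ, 1 ≤ n → Continuous (f n)) (hfof : FeebleOpen f)
    (hsurj : ∀ n : ℕ, 1 ≤ n → Function.Surjective (f n)) (hF : Continuous F)
    (hunif : TendstoUniformly (fun n x => f n x) F Filter.atTop)
    (hcoll : CollectivelyConverges f F)
    (hsynd : NDSSyndeticallyTransitive f) (hwm : NDSWeaklyMixing f) :
    ∀ U V : Set X, IsOpen U → U.Nonempty → IsOpen V → V.Nonempty →
      TSynd {n : ℕ | 0 < n ∧ (nds f 1 n '' U ∩ V).Nonempty} := by
  intro U V hU hUne hV hVne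
  have hFsurj : Function.Surjective F := limit_surj hF hsurj hunif
  have hFsynd : MapSyndeticallyTransitive F := limit_syndTrans hcont hsurj hcoll hsynd
  have hFwm : MapWeaklyMixing F := limit_wm hcont hsurj hcoll hwm
  obtain ⟨v, hv⟩ := hVne
  obtain ⟨δ, hδ, hball⟩ := Metric.isOpen_iff.mp hV v hv
  set ε := δ / 2 with hεdef
  have hεpos : 0 < ε := by positivity
  obtain ⟨r₀, hr₀⟩ := hcoll ε hεpos
  set m := r₀ + 1 with hmdef
  set A := interior (nds f 1 m '' U) with hAdef
  have hAne : A.Nonempty := nds_feeble hfof le_rfl m hU hUne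
  have hAo : IsOpen A := isOpen_interior
  intro p
  obtain ⟨u₀, hu₀⟩ := hUne
  obtain ⟨A', B', hA'o, hA'ne, hB'o, hB'ne, hprop⟩ :=
    finInter hF hFwm u₀ (p + 1) (fun _ => A)
      (fun j => (F^[(j : ℕ)]) ⁻¹' (Metric.ball v ε))
      (fun _ => hAo) (fun _ => hAne)
      (fun j => ((hF.iterate _).isOpen_preimage _ Metric.isOpen_ball))
      (fun j => by
        obtain ⟨x, hx⟩ := (hFsurj.iterate (j : ℕ)) v
        exact ⟨x, by rw [Set.mem_preimage, hx]; exact Metric.mem_ball_self hεpos⟩)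
  obtain ⟨M, hM⟩ := hFsynd A' B' hA'o hA'ne hB'o hB'ne
  refine ⟨M + m, fun i hi => ?_⟩
  obtain ⟨j₀, ⟨hj₀pos, hj₀ne⟩, hj₀1, hj₀2⟩ := hM i hi
  refine ⟨j₀ + m, by omega, by omega, fun j hj1 hj2 => ?_⟩
  set t := j - (j₀ + m) with htdef
  have htp : t < p + 1 := by omega
  have hkey := hprop j₀ hj₀ne ⟨t, htp⟩
  obtain ⟨z, ⟨a, haA, rfl⟩, hz⟩ := hkey
  rw [Set.mem_preimage] at hz
  set k := j₀ + t with hkdef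
  have hFk : F^[k] a ∈ Metric.ball v ε := by
    have : F^[t] (F^[j₀] a) = F^[k] a := by
      rw [← Function.iterate_add_apply, hkdef, Nat.add_comm]
    rwa [this] at hz
  obtain ⟨x, hxU, hax⟩ := interior_subset haA
  have heq : nds f 1 (m + k) x = nds f (1 + m) k a := by
    rw [nds_add, ← hax]; rfl
  have hk1 : 1 ≤ k := by omega
  have hdist : dist (nds f (1 + m) k a) (F^[k] a) < ε := hr₀ (1 + m) (by omega) k hk1 a
  have hjmk : j = m + k := by omega
  refine ⟨by omega, ⟨nds f 1 j x, ⟨x, hxU, rfl⟩, ?_⟩⟩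
  rw [hjmk, heq]
  refine hball ?_
  rw [Metric.mem_ball] at hFk ⊢
  have := dist_triangle (nds f (1 + m) k a) (F^[k] a) v
  rw [hεdef] at *
  linarith

end AuxProof

theorem product_syndeticallyTransitive_weaklyMixing {X : Type*} [MetricSpace X]
    [CompactSpace X] {Y : Type*} [MetricSpace Y] [CompactSpace Y]
    (f : ℕ → X → X) (F : X → X) (g : ℕ → Y → Y) (G : Y → Y)
    (hcontf : ∀ n : ℕ, 1 ≤ n → Continuous (f n))
    (hcontg : ∀ n : ℕ, 1 ≤ n → Continuous (g n))
    (hfof : FeebleOpen f) (hfog : FeebleOpen g)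
    (hsurjf : ∀ n : ℕ, 1 ≤ n → Function.Surjective (f n))
    (hsurjg : ∀ n : ℕ, 1 ≤ n → Function.Surjective (g n))
    (hF : Continuous F) (hG : Continuous G)
    (huniff : TendstoUniformly (fun n x => f n x) F Filter.atTop)
    (hunifg : TendstoUniformly (fun n y => g n y) G Filter.atTop)
    (hcollf : CollectivelyConverges f F)
    (hcollg : CollectivelyConverges g G)
    (hsyndf : NDSSyndeticallyTransitive f) (hwmf : NDSWeaklyMixing f)
    (hsyndg : NDSSyndeticallyTransitive g) (hwmg : NDSWeaklyMixing g) :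
    NDSSyndeticallyTransitive (fun n (p : X × Y) => (f n p.1, g n p.2)) ∧
      NDSWeaklyMixing (fun n (p : X × Y) => (f n p.1, g n p.2)) := by
  have masterf := master hcontf hfof hsurjf hF huniff hcollf hsyndf hwmf
  have masterg := master hcontg hfog hsurjg hG hunifg hcollg hsyndg hwmg
  constructor
  · -- syndetic transitivity of the product
    intro W₁ W₂ hW₁ hW₁ne hW₂ hW₂ne
    obtain ⟨⟨a₁, b₁⟩, hw₁⟩ := hW₁ne
    obtain ⟨⟨a₂, b₂⟩, hw₂⟩ := hW₂ne
    obtain ⟨Ux₁, Uy₁, hUx₁o, hUy₁o, ha₁, hb₁, hsub₁⟩ := isOpen_prod_iff.mp hW₁ a₁ b₁ hw₁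
    obtain ⟨Ux₂, Uy₂, hUx₂o, hUy₂o, ha₂, hb₂, hsub₂⟩ := isOpen_prod_iff.mp hW₂ a₂ b₂ hw₂
    have h1 := masterf Ux₁ Ux₂ hUx₁o ⟨a₁, ha₁⟩ hUx₂o ⟨a₂, ha₂⟩
    have h2 := masterg Uy₁ Uy₂ hUy₁o ⟨b₁, hb₁⟩ hUy₂o ⟨b₂, hb₂⟩
    obtain ⟨M, hM⟩ := (h1.inter h2).syndetic
    refine ⟨M, fun i hi => ?_⟩
    obtain ⟨j, ⟨⟨hj0, hne1⟩, ⟨-, hne2⟩⟩, hji1, hji2⟩ := hM i hi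
    refine ⟨j, ⟨hj0, ?_⟩, hji1, hji2⟩
    obtain ⟨qx, ⟨x, hx, rfl⟩, hqx⟩ := hne1
    obtain ⟨qy, ⟨y, hy, rfl⟩, hqy⟩ := hne2
    exact ⟨(nds f 1 j x, nds g 1 j y),
      ⟨(x, y), hsub₁ ⟨hx, hy⟩, nds_prod f g 1 j (x, y)⟩, hsub₂ ⟨hqx, hqy⟩⟩
  · -- weak mixing of the product
    intro W₁ W₂ W₃ W₄ hW₁ hW₁ne hW₂ hW₂ne hW₃ hW₃ne hW₄ hW₄ne
    obtain ⟨⟨a₁, b₁⟩, hw₁⟩ := hW₁ne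
    obtain ⟨⟨a₂, b₂⟩, hw₂⟩ := hW₂ne
    obtain ⟨⟨a₃, b₃⟩, hw₃⟩ := hW₃ne
    obtain ⟨⟨a₄, b₄⟩, hw₄⟩ := hW₄ne
    obtain ⟨Ux₁, Uy₁, hUx₁o, hUy₁o, ha₁, hb₁, hsub₁⟩ := isOpen_prod_iff.mp hW₁ a₁ b₁ hw₁
    obtain ⟨Ux₂, Uy₂, hUx₂o, hUy₂o, ha₂, hb₂, hsub₂⟩ := isOpen_prod_iff.mp hW₂ a₂ b₂ hw₂
    obtain ⟨Ux₃, Uy₃, hUx₃o, hUy₃o, ha₃, hb₃, hsub₃⟩ := isOpen_prod_iff.mp hW₃ a₃ b₃ hw₃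
    obtain ⟨Ux₄, Uy₄, hUx₄o, hUy₄o, ha₄, hb₄, hsub₄⟩ := isOpen_prod_iff.mp hW₄ a₄ b₄ hw₄
    have h1 := masterf Ux₁ Ux₃ hUx₁o ⟨a₁, ha₁⟩ hUx₃o ⟨a₃, ha₃⟩
    have h2 := masterf Ux₂ Ux₄ hUx₂o ⟨a₂, ha₂⟩ hUx₄o ⟨a₄, ha₄⟩
    have h3 := masterg Uy₁ Uy₃ hUy₁o ⟨b₁, hb₁⟩ hUy₃o ⟨b₃, hb₃⟩
    have h4 := masterg Uy₂ Uy₄ hUy₂o ⟨b₂, hb₂⟩ hUy₄o ⟨b₄, hb₄⟩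
    obtain ⟨M, hM⟩ := (((h1.inter h2).inter h3).inter h4).syndetic
    obtain ⟨j, ⟨⟨⟨⟨hj0, hne1⟩, ⟨-, hne2⟩⟩, ⟨-, hne3⟩⟩, ⟨-, hne4⟩⟩, -, -⟩ := hM 1 le_rfl
    refine ⟨j, hj0, ?_, ?_⟩
    · obtain ⟨qx, ⟨x, hx, rfl⟩, hqx⟩ := hne1
      obtain ⟨qy, ⟨y, hy, rfl⟩, hqy⟩ := hne3
      exact ⟨(nds f 1 j x, nds g 1 j y),
        ⟨(x, y), hsub₁ ⟨hx, hy⟩, nds_prod f g 1 j (x, y)⟩, hsub₃ ⟨hqx, hqy⟩⟩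
    · obtain ⟨qx, ⟨x, hx, rfl⟩, hqx⟩ := hne2
      obtain ⟨qy, ⟨y, hy, rfl⟩, hqy⟩ := hne4
      exact ⟨(nds f 1 j x, nds g 1 j y),
        ⟨(x, y), hsub₂ ⟨hx, hy⟩, nds_prod f g 1 j (x, y)⟩, hsub₄ ⟨hqx, hqy⟩⟩
end

section
/- Let (X,d) be a compact metric space and let (X, f_{1,∞}) be a non-autonomous discrete system such that f_{1,∞} is feeble open, each f_n is surjective, (f_n) converges uniformly to a continuous map f : X → X, and the compositions (f_r^k) converge collectively to (f^k). If f_{1,∞} is multi-sensitive, then f_{1,∞} is thickly sensitive. -/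
open Set Filter

section Aux

variable {X : Type*}

lemma nds_succ_apply (f : ℕ → X → X) (i n : ℕ) (x : X) :
    nds f i (n + 1) x = f (i + n) (nds f i n x) := rfl

lemma nds_add_apply (f : ℕ → X → X) (i k : ℕ) :
    ∀ l (x : X), nds f i (k + l) x = nds f (i + k) l (nds f i k x)
  | 0, x => rfl
  | l + 1, x => by
    have h : k + (l + 1) = (k + l) + 1 := by omega
    rw [h, nds_succ_apply, nds_add_apply f i k l x, nds_succ_apply, add_assoc]

variable [MetricSpace X]

lemma nds_continuous (f : ℕ → X → X) (hcont : ∀ n : ℕ, 1 ≤ n → Continuous (f n)) :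
    ∀ n, Continuous (nds f 1 n)
  | 0 => continuous_id
  | n + 1 => (hcont (1 + n) (by omega)).comp (nds_continuous f hcont n)

lemma nds_surjective (f : ℕ → X → X) (hsurj : ∀ n : ℕ, 1 ≤ n → Function.Surjective (f n)) :
    ∀ n, Function.Surjective (nds f 1 n)
  | 0 => Function.surjective_id
  | n + 1 => (hsurj (1 + n) (by omega)).comp (nds_surjective f hsurj n)

lemma feeble_iter (f : ℕ → X → X) (hfo : FeebleOpen f) :
    ∀ q (U : Set X), IsOpen U → U.Nonempty →
      ∃ V : Set X, IsOpen V ∧ V.Nonempty ∧ V ⊆ nds f 1 q '' U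
  | 0, U, hUo, hUne => ⟨U, hUo, hUne, by simp [nds]⟩
  | q + 1, U, hUo, hUne => by
    obtain ⟨V, hVo, hVne, hVsub⟩ := feeble_iter f hfo q U hUo hUne
    refine ⟨interior (f (1 + q) '' V), isOpen_interior,
      hfo (1 + q) (by omega) V hVo hVne, ?_⟩
    intro x hx
    have hx' : x ∈ f (1 + q) '' V := interior_subset hx
    have : f (1 + q) '' V ⊆ f (1 + q) '' (nds f 1 q '' U) := Set.image_mono hVsub
    have hx'' := this hx'
    rw [← Set.image_comp] at hx''
    exact hx''

lemma limit_surjective [CompactSpace X] (f : ℕ → X → X) (F : X → X)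
    (hF : Continuous F)
    (hunif : TendstoUniformly (fun n x => f n x) F Filter.atTop)
    (hsurj : ∀ n : ℕ, 1 ≤ n → Function.Surjective (f n)) :
    Function.Surjective F := by
  intro y
  by_contra hy
  push_neg at hy
  have hK : IsCompact (Set.range F) := isCompact_range hF
  have hKc : IsClosed (Set.range F) := hK.isClosed
  have hyK : y ∈ (Set.range F)ᶜ := by
    intro h
    obtain ⟨x, hx⟩ := h
    exact hy x hx
  obtain ⟨ε, hε, hball⟩ := Metric.isOpen_iff.mp hKc.isOpen_compl y hyK
  rw [Metric.tendstoUniformly_iff] at hunif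
  obtain ⟨N, hN⟩ := (hunif ε hε).exists_forall_of_atTop
  have hN1 : max N 1 ≥ N := le_max_left _ _
  obtain ⟨x, hx⟩ := hsurj (max N 1) (le_max_right _ _) y
  have hdist : dist (F x) (f (max N 1) x) < ε := hN (max N 1) hN1 x
  rw [hx] at hdist
  have : F x ∈ Metric.ball y ε := by
    rw [Metric.mem_ball]
    exact hdist
  exact hball this ⟨x, rfl⟩

end Aux

theorem multiSensitive_implies_thicklySensitive {X : Type*} [MetricSpace X] [CompactSpace X]
    (f : ℕ → X → X) (F : X → X)
    (hcont : ∀ n : ℕ, 1 ≤ n → Continuous (f n))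
    (hfo : FeebleOpen f)
    (hsurj : ∀ n : ℕ, 1 ≤ n → Function.Surjective (f n))
    (hF : Continuous F)
    (hunif : TendstoUniformly (fun n x => f n x) F Filter.atTop)
    (hcoll : CollectivelyConverges f F)
    (hms : NDSMultiSensitive f) :
    NDSThicklySensitive f := by
  obtain ⟨δ, hδ, hms⟩ := hms
  refine ⟨δ / 2, by linarith, fun U hUo hUne p => ?_⟩
  have hXne : Nonempty X := ⟨hUne.choose⟩
  obtain ⟨z⟩ := hXne
  -- collective convergence data
  obtain ⟨r₀, hr₀⟩ := hcoll (δ / 8) (by linarith)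
  set r₁ : ℕ := max r₀ 1 with hr₁def
  set q : ℕ := r₁ - 1 with hqdef
  have hq1 : 1 + q = r₁ := by omega
  have hr₁ : ∀ k : ℕ, 1 ≤ k → ∀ x : X, dist (nds f r₁ k x) (F^[k] x) < δ / 8 :=
    fun k hk x => hr₀ r₁ (le_max_left _ _) k hk x
  have hFsurj : Function.Surjective F := limit_surjective f F hF hunif hsurj
  have hndsc := nds_continuous f hcont
  have hndss := nds_surjective f hsurj
  -- open set inside the image of U
  obtain ⟨V, hVo, hVne, hVsub⟩ := feeble_iter f hfo q U hUo hUne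
  -- small balls
  set Bf : Set X :=
    ⋂ m ∈ Finset.Icc 1 q, (nds f 1 m) ⁻¹' (Metric.ball (nds f 1 m z) (δ / 2)) with hBfdef
  have hBfo : IsOpen Bf := isOpen_biInter_finset fun m _ =>
    (Metric.isOpen_ball).preimage (hndsc m)
  have hzBf : z ∈ Bf := by
    refine Set.mem_iInter₂.mpr fun m _ => ?_
    simp only [Set.mem_preimage, Metric.mem_ball, dist_self]
    positivity
  have hBfsmall : ∀ m, 1 ≤ m → m ≤ q → ∀ x ∈ Bf, ∀ y ∈ Bf,
      dist (nds f 1 m x) (nds f 1 m y) < δ := by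
    intro m h1 h2 x hx y hy
    have hx' := Set.mem_iInter₂.mp hx m (Finset.mem_Icc.mpr ⟨h1, h2⟩)
    have hy' := Set.mem_iInter₂.mp hy m (Finset.mem_Icc.mpr ⟨h1, h2⟩)
    rw [Set.mem_preimage, Metric.mem_ball] at hx' hy'
    calc dist (nds f 1 m x) (nds f 1 m y)
        ≤ dist (nds f 1 m x) (nds f 1 m z) + dist (nds f 1 m z) (nds f 1 m y) :=
          dist_triangle _ _ _
      _ < δ := by rw [dist_comm (nds f 1 m y) (nds f 1 m z)] at hy'; linarith
  set BF : Set X :=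
    ⋂ m ∈ Finset.Icc 1 p, (F^[m]) ⁻¹' (Metric.ball (F^[m] z) (δ / 4)) with hBFdef
  have hBFo : IsOpen BF := isOpen_biInter_finset fun m _ =>
    (Metric.isOpen_ball).preimage (hF.iterate m)
  have hzBF : z ∈ BF := by
    refine Set.mem_iInter₂.mpr fun m _ => ?_
    simp only [Set.mem_preimage, Metric.mem_ball, dist_self]
    positivity
  have hBFsmall : ∀ m, 1 ≤ m → m ≤ p → ∀ x ∈ BF, ∀ y ∈ BF,
      dist (F^[m] x) (F^[m] y) < δ / 2 := by
    intro m h1 h2 x hx y hy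
    have hx' := Set.mem_iInter₂.mp hx m (Finset.mem_Icc.mpr ⟨h1, h2⟩)
    have hy' := Set.mem_iInter₂.mp hy m (Finset.mem_Icc.mpr ⟨h1, h2⟩)
    rw [Set.mem_preimage, Metric.mem_ball] at hx' hy'
    calc dist (F^[m] x) (F^[m] y)
        ≤ dist (F^[m] x) (F^[m] z) + dist (F^[m] z) (F^[m] y) := dist_triangle _ _ _
      _ < δ / 2 := by rw [dist_comm (F^[m] y) (F^[m] z)] at hy'; linarith
  -- the family
  set A : Fin (p + 3) → Set X := fun i =>
    if i.val ≤ p then (nds f 1 q) ⁻¹' (F^[i.val] ⁻¹' V)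
    else if i.val = p + 1 then (nds f 1 q) ⁻¹' BF
    else Bf with hAdef
  have hAo : ∀ i, IsOpen (A i) := by
    intro i
    simp only [hAdef]
    split_ifs with h1 h2
    · exact ((hVo.preimage (hF.iterate i.val)).preimage (hndsc q))
    · exact hBFo.preimage (hndsc q)
    · exact hBfo
  have hAne : ∀ i, (A i).Nonempty := by
    intro i
    simp only [hAdef]
    split_ifs with h1 h2
    · obtain ⟨v, hv⟩ := hVne
      obtain ⟨w, hw⟩ := (hFsurj.iterate i.val) v
      obtain ⟨x, hx⟩ := hndss q w
      exact ⟨x, by simp [Set.mem_preimage, hx, hw, hv]⟩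
    · obtain ⟨x, hx⟩ := hndss q z
      exact ⟨x, by simp [Set.mem_preimage, hx, hzBF]⟩
    · exact ⟨z, hzBf⟩
  obtain ⟨n, hn⟩ := hms (p + 3) (by omega) A hAo hAne
  rw [Set.mem_iInter] at hn
  -- membership unfolding
  have hnmem : ∀ i : Fin (p + 3), 0 < n ∧ ∃ x ∈ A i, ∃ y ∈ A i,
      δ < dist (nds f 1 n x) (nds f 1 n y) := fun i => hn i
  have hnpos : 0 < n := (hnmem 0).1
  -- n > q, from the Bf component
  have hnq : q < n := by
    by_contra h
    push_neg at h
    obtain ⟨_, x, hx, y, hy, hxy⟩ := hnmem ⟨p + 2, by omega⟩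
    have hA : A ⟨p + 2, by omega⟩ = Bf := by
      have hv : ((⟨p + 2, by omega⟩ : Fin (p + 3)) : ℕ) = p + 2 := rfl
      simp only [hAdef, hv]
      rw [if_neg (by omega), if_neg (by omega)]
    rw [hA] at hx hy
    exact absurd hxy (not_lt.mpr (le_of_lt (hBfsmall n hnpos h x hx y hy)))
  set k : ℕ := n - q with hkdef
  have hk1 : 1 ≤ k := by omega
  have hnqk : n = q + k := by omega
  -- key estimate turning f-separation into F-separation
  have hkey : ∀ i : Fin (p + 3), ∀ x ∈ A i, ∀ y ∈ A i,
      δ < dist (nds f 1 n x) (nds f 1 n y) →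
      δ / 2 + δ / 4 < dist (F^[k] (nds f 1 q x)) (F^[k] (nds f 1 q y)) := by
    intro i x _ y _ hxy
    set a := nds f 1 q x
    set b := nds f 1 q y
    have hxa : nds f 1 n x = nds f r₁ k a := by
      rw [hnqk, nds_add_apply, hq1]
    have hyb : nds f 1 n y = nds f r₁ k b := by
      rw [hnqk, nds_add_apply, hq1]
    rw [hxa, hyb] at hxy
    have h1 := hr₁ k hk1 a
    have h2 := hr₁ k hk1 b
    have htri : dist (nds f r₁ k a) (nds f r₁ k b) ≤
        dist (nds f r₁ k a) (F^[k] a) + dist (F^[k] a) (F^[k] b) +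
        dist (F^[k] b) (nds f r₁ k b) := dist_triangle4 _ _ _ _
    rw [dist_comm (F^[k] b)] at htri
    linarith
  -- k > p, from the BF component
  have hkp : p < k := by
    by_contra h
    push_neg at h
    obtain ⟨_, x, hx, y, hy, hxy⟩ := hnmem ⟨p + 1, by omega⟩
    have hA : A ⟨p + 1, by omega⟩ = (nds f 1 q) ⁻¹' BF := by
      have hv : ((⟨p + 1, by omega⟩ : Fin (p + 3)) : ℕ) = p + 1 := rfl
      simp only [hAdef, hv]
      rw [if_neg (by omega)]
      simp
    rw [hA] at hx hy
    have := hkey ⟨p + 1, by omega⟩ x (by rw [hA]; exact hx) y (by rw [hA]; exact hy) hxy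
    have hsmall := hBFsmall k hk1 h _ (Set.mem_preimage.mp hx) _ (Set.mem_preimage.mp hy)
    linarith
  -- for each j ≤ p, the time q + (k - j) is a sensitive time for U with δ/2
  have hkeyj : ∀ j, j ≤ p → (q + (k - j)) ∈ SensSet f U (δ / 2) := by
    intro j hj
    obtain ⟨_, x, hx, y, hy, hxy⟩ := hnmem ⟨j, by omega⟩
    have hA : A ⟨j, by omega⟩ = (nds f 1 q) ⁻¹' (F^[j] ⁻¹' V) := by
      have hv : ((⟨j, by omega⟩ : Fin (p + 3)) : ℕ) = j := rfl
      simp only [hAdef, hv]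
      rw [if_pos hj]
    rw [hA] at hx hy
    have hsep := hkey ⟨j, by omega⟩ x (by rw [hA]; exact hx) y (by rw [hA]; exact hy) hxy
    set a' : X := F^[j] (nds f 1 q x) with ha'def
    set b' : X := F^[j] (nds f 1 q y) with hb'def
    have ha'V : a' ∈ V := hx
    have hb'V : b' ∈ V := hy
    set m : ℕ := k - j with hmdef
    have hm1 : 1 ≤ m := by omega
    have hFa : F^[k] (nds f 1 q x) = F^[m] a' := by
      rw [ha'def, ← Function.iterate_add_apply]
      congr 1
      omega
    have hFb : F^[k] (nds f 1 q y) = F^[m] b' := by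
      rw [hb'def, ← Function.iterate_add_apply]
      congr 1
      omega
    rw [hFa, hFb] at hsep
    -- pull back to U
    obtain ⟨u, huU, hua⟩ := hVsub ha'V
    obtain ⟨v, hvU, hvb⟩ := hVsub hb'V
    refine ⟨by omega, u, huU, v, hvU, ?_⟩
    have hu' : nds f 1 (q + m) u = nds f r₁ m a' := by
      rw [nds_add_apply, hq1, hua]
    have hv' : nds f 1 (q + m) v = nds f r₁ m b' := by
      rw [nds_add_apply, hq1, hvb]
    rw [hu', hv']
    have h1 := hr₁ m hm1 a'
    have h2 := hr₁ m hm1 b'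
    have htri : dist (F^[m] a') (F^[m] b') ≤
        dist (F^[m] a') (nds f r₁ m a') + dist (nds f r₁ m a') (nds f r₁ m b') +
        dist (nds f r₁ m b') (F^[m] b') := dist_triangle4 _ _ _ _
    linarith [dist_comm (F^[m] a') (nds f r₁ m a')]
  -- conclude thickness
  refine ⟨q + (k - p), fun j hj1 hj2 => ?_⟩
  have hjq : j = q + (k - (k + q - j)) := by omega
  rw [hjq]
  exact hkeyj (k + q - j) (by omega)
end
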